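/- Let V be a real vector space with nondegenerate symmetric bilinear form, S₁, S₂ complementary orthogonal subspaces (V = S₁ ⊕⊥ S₂), and let N be an endomorphism of V with N(S₁) ⊆ S₂ and N(S₂) ⊆ S₁. Then N is skew-symmetric with respect to the bilinear form if and only if N lies in the span of {a∧b : a ∈ S₁, b ∈ S₂}, where a∧b is the endomorphism v ↦ (a,v)b − (b,v)a. -/

import Mathlib

/-- for orthogonal complementary subspaces `S₁, S₂` and an endomorphism `N`
interchanging them, `N` is skew-symmetric w.r.t. the nondegenerate symmetric form `B` iff
`N` lies in the span of `{a∧b : a ∈ S₁, b ∈ S₂}`, where `a∧b : v ↦ (a,v)b − (b,v)a`. -/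
theorem skew_iff_in_wedge_span {V : Type*} [AddCommGroup V] [Module ℝ V]
    [FiniteDimensional ℝ V]
    (B : V →ₗ[ℝ] V →ₗ[ℝ] ℝ)
    (hsymm : ∀ x y : V, B x y = B y x)
    (hnd : ∀ x : V, (∀ y : V, B x y = 0) → x = 0)
    (S₁ S₂ : Submodule ℝ V)
    (hcompl : IsCompl S₁ S₂)
    (horth : ∀ a ∈ S₁, ∀ b ∈ S₂, B a b = 0)
    (N : V →ₗ[ℝ] V)
    (hN1 : ∀ a ∈ S₁, N a ∈ S₂) (hN2 : ∀ b ∈ S₂, N b ∈ S₁) :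
    (∀ x y : V, B (N x) y = - B x (N y)) ↔
      N ∈ Submodule.span ℝ
        {T : V →ₗ[ℝ] V | ∃ a ∈ S₁, ∃ b ∈ S₂,
          T = (B a).smulRight b - (B b).smulRight a} := by
  classical
  -- decomposition of any vector
  have hdecomp : ∀ v : V, ∃ x ∈ S₁, ∃ y ∈ S₂, x + y = v := by
    intro v
    have : v ∈ S₁ ⊔ S₂ := by rw [hcompl.sup_eq_top]; trivial
    simpa using Submodule.mem_sup.mp this
  -- every element of the span is skew
  have hspan_skew : ∀ T ∈ Submodule.span ℝ
      {T : V →ₗ[ℝ] V | ∃ a ∈ S₁, ∃ b ∈ S₂,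
        T = (B a).smulRight b - (B b).smulRight a},
      ∀ x y : V, B (T x) y = - B x (T y) := by
    intro T hT
    refine Submodule.span_induction ?_ ?_ ?_ ?_ hT
    · rintro T ⟨a, ha, b, hb, rfl⟩ x y
      simp only [LinearMap.sub_apply, LinearMap.smulRight_apply, map_sub, map_smul,
        LinearMap.smul_apply, smul_eq_mul]
      rw [hsymm x b, hsymm x a]
      ring
    · intro x y; simp
    · intro S T hS hT ihS ihT x y
      simp [ihS x y, ihT x y]; ring
    · intro c T hT ih x y
      simp [ih x y]
  constructor
  · intro hskew
    -- B restricted to S₁ gives iso onto dual of S₁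
    let φ : S₁ →ₗ[ℝ] Module.Dual ℝ S₁ :=
      { toFun := fun a => (B a.1).domRestrict S₁
        map_add' := by intro a b; ext x; simp
        map_smul' := by intro c a; ext x; simp }
    have hφinj : Function.Injective φ := by
      rw [← LinearMap.ker_eq_bot, LinearMap.ker_eq_bot']
      intro a ha
      have h1 : ∀ x ∈ S₁, B a.1 x = 0 := by
        intro x hx
        have := congrFun (congrArg (fun f => f.toFun) ha) ⟨x, hx⟩
        simpa [φ] using this
      have h0 : a.1 = 0 := by
        apply hnd
        intro v
        obtain ⟨x, hx, y, hy, rfl⟩ := hdecomp v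
        rw [map_add, h1 x hx, horth a.1 a.2 y hy, add_zero]
      exact Subtype.ext h0
    have hφsurj : Function.Surjective φ :=
      (LinearMap.injective_iff_surjective_of_finrank_eq_finrank
        (Subspace.dual_finrank_eq).symm).mp hφinj
    -- basis of S₁
    let bs := Module.finBasis ℝ S₁
    choose a haφ using fun i => hφsurj (bs.coord i)
    -- candidate element of the span
    let M : V →ₗ[ℝ] V := ∑ i, ((B (a i).1).smulRight (N (bs i).1)
      - (B (N (bs i).1)).smulRight (a i).1)
    have hMmem : M ∈ Submodule.span ℝ
        {T : V →ₗ[ℝ] V | ∃ a ∈ S₁, ∃ b ∈ S₂,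
          T = (B a).smulRight b - (B b).smulRight a} := by
      apply Submodule.sum_mem
      intro i _
      exact Submodule.subset_span ⟨(a i).1, (a i).2, N (bs i).1, hN1 _ (bs i).2, rfl⟩
    have hMskew := hspan_skew M hMmem
    -- N and M agree on S₁
    have hS1 : ∀ x ∈ S₁, N x = M x := by
      intro x hx
      have hMx : M x = ∑ i, (bs.repr ⟨x, hx⟩ i) • N (bs i).1 := by
        simp only [M, LinearMap.sum_apply, LinearMap.sub_apply, LinearMap.smulRight_apply]
        refine Finset.sum_congr rfl ?_
        intro i _
        have hz : B (N (bs i).1) x = 0 := by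
          rw [hsymm]; exact horth x hx _ (hN1 _ (bs i).2)
        have hc : B (a i).1 x = bs.repr ⟨x, hx⟩ i := by
          have := congrFun (congrArg (fun f => f.toFun) (haφ i)) ⟨x, hx⟩
          simpa [φ, Module.Basis.coord_apply] using this
        rw [hz, hc]; simp
      have hNx : N x = ∑ i, (bs.repr ⟨x, hx⟩ i) • N (bs i).1 := by
        have hrepr : (∑ i, (bs.repr ⟨x, hx⟩ i) • bs i) = (⟨x, hx⟩ : S₁) :=
          bs.sum_repr ⟨x, hx⟩
        have : x = ∑ i, (bs.repr ⟨x, hx⟩ i) • (bs i).1 := by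
          have := congrArg (Submodule.subtype S₁) hrepr
          simp only [map_sum, map_smul, Submodule.subtype_apply] at this
          exact this.symm
        conv_lhs => rw [this]
        rw [map_sum]
        simp
      rw [hNx, hMx]
    -- N and M agree on S₂
    have hS2 : ∀ y ∈ S₂, N y = M y := by
      intro y hy
      have hMy : M y ∈ S₁ := by
        have : M y = ∑ i, (-(B (N (bs i).1) y)) • (a i).1 := by
          simp only [M, LinearMap.sum_apply, LinearMap.sub_apply, LinearMap.smulRight_apply]
          refine Finset.sum_congr rfl ?_
          intro i _
          rw [horth (a i).1 (a i).2 y hy]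
          simp
        rw [this]
        exact Submodule.sum_mem _ fun i _ => Submodule.smul_mem _ _ (a i).2
      have hw : N y - M y = 0 := by
        apply hnd
        intro v
        obtain ⟨x, hx, z, hz, rfl⟩ := hdecomp v
        have h1 : B (N y - M y) x = 0 := by
          rw [map_sub, LinearMap.sub_apply, hskew, hMskew, hS1 x hx]
          ring
        have h2 : B (N y - M y) z = 0 :=
          horth _ (Submodule.sub_mem _ (hN2 y hy) hMy) z hz
        rw [map_add, h1, h2, add_zero]
      exact sub_eq_zero.mp hw
    have hNM : N = M := by
      ext v
      obtain ⟨x, hx, z, hz, rfl⟩ := hdecomp v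
      rw [map_add, map_add, hS1 x hx, hS2 z hz]
    rw [hNM]
    exact hMmem
  · intro hmem x y
    exact hspan_skew N hmem x y
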